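/- The Frank–Heimiller sequence of length n², defined by s_{qn+r} = ω^{qr} for 0 ≤ q,r < n where ω = e^{2πi/n}, is a perfect sequence: for every τ with τ ≢ 0 (mod n²), Σ_{k=0}^{n²-1} s_k · conj(s_{k+τ}) = 0, indices taken mod n². -/

import Mathlib

open Finset Complex

/-- The Frank–Heimiller sequence `s_{qn+r} = ω^{qr}` of length `n²` is perfect. -/
theorem frank_sequence_perfect (n : ℕ) (hn : 0 < n) :
    ∀ τ : ℕ, ¬ n ^ 2 ∣ τ →
      ∑ k ∈ range (n ^ 2),
        Complex.exp (2 * Real.pi * Complex.I / n) ^ ((k / n) * (k % n)) *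
          (starRingEnd ℂ) (Complex.exp (2 * Real.pi * Complex.I / n) ^
            ((((k + τ) % n ^ 2) / n) * (((k + τ) % n ^ 2) % n))) = 0 := by
  intro τ hτ
  set ω : ℂ := Complex.exp (2 * Real.pi * Complex.I / n) with hωdef
  have hprim : IsPrimitiveRoot ω n := Complex.isPrimitiveRoot_exp n hn.ne'
  have hω0 : ω ≠ 0 := hprim.ne_zero hn.ne'
  have hωn : ω ^ (n : ℤ) = 1 := by rw [zpow_natCast]; exact hprim.pow_eq_one
  -- ω ^ s depends only on s mod n
  have hEmod : ∀ s t : ℤ, s % (n : ℤ) = t % (n : ℤ) → ω ^ s = ω ^ t := by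
    have h1 : ∀ s : ℤ, ω ^ s = ω ^ (s % (n : ℤ)) := by
      intro s
      conv_lhs => rw [← Int.mul_ediv_add_emod s (n : ℤ)]
      rw [zpow_add₀ hω0, zpow_mul, hωn, one_zpow, one_mul]
    intro s t h
    rw [h1 s, h, ← h1 t]
  -- (ω ^ s) ^ n = 1
  have hpow_n : ∀ s : ℤ, (ω ^ s) ^ n = 1 := by
    intro s
    rw [← zpow_natCast (ω ^ s), ← zpow_mul,
      hEmod (s * n) 0 (by simp [Int.mul_emod_left]), zpow_zero]
  -- geometric sums vanish
  have hgeom : ∀ s : ℤ, ω ^ s ≠ 1 → ∑ q ∈ range n, (ω ^ s) ^ q = 0 := by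
    intro s hs
    rw [geom_sum_eq hs, hpow_n, sub_self, zero_div]
  -- conjugation
  have hconjω : (starRingEnd ℂ) ω = ω⁻¹ := by
    rw [hωdef, ← Complex.exp_conj, ← Complex.exp_neg]
    congr 1
    rw [map_div₀]
    simp [Complex.conj_I, map_ofNat]
    ring
  have hconj : ∀ m : ℕ, (starRingEnd ℂ) (ω ^ m) = ω ^ (-(m : ℤ)) := by
    intro m
    rw [map_pow, hconjω, inv_pow, ← zpow_natCast, ← zpow_neg]
  -- reindexing
  have hre : ∀ f : ℕ → ℂ, ∑ k ∈ range (n ^ 2), f k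
      = ∑ r ∈ range n, ∑ q ∈ range n, f (r + n * q) := by
    intro f
    rw [← Finset.sum_product']
    apply Finset.sum_nbij' (fun k => (k % n, k / n)) (fun p => p.1 + n * p.2)
    · intro k hk
      simp only [Finset.mem_range, Finset.mem_product] at *
      refine ⟨Nat.mod_lt _ hn, ?_⟩
      have : k < n * n := by rw [← pow_two]; exact hk
      exact Nat.div_lt_of_lt_mul this
    · intro p hp
      simp only [Finset.mem_range, Finset.mem_product] at *
      have h1 := hp.1
      have h2 := hp.2
      have : p.1 + n * p.2 < n * n := by nlinarith
      rw [pow_two]; exact this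
    · intro k _; simp [Nat.mod_add_div]
    · intro p hp
      simp only [Finset.mem_range, Finset.mem_product] at hp
      simp [Nat.add_mul_mod_self_left, Nat.mod_eq_of_lt hp.1,
        Nat.add_mul_div_left _ _ hn, Nat.div_eq_of_lt hp.1]
    · intro k _; simp [Nat.mod_add_div]
  rw [hre]
  set b := τ % n with hbdef
  set a := τ / n with hadef
  have hτs : τ = b + n * a := (Nat.mod_add_div τ n).symm
  -- the per-term formula
  have key : ∀ r < n, ∀ q < n,
      ω ^ ((r + n * q) / n * ((r + n * q) % n)) *
        (starRingEnd ℂ) (ω ^ ((r + n * q + τ) % n ^ 2 / n * ((r + n * q + τ) % n ^ 2 % n)))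
      = (ω ^ ((r : ℤ) - ((r + b) % n : ℕ))) ^ q
          * ω ^ (-((((r + b) / n + a) * ((r + b) % n) : ℕ) : ℤ)) := by
    intro r hr q hq
    have hk1 : (r + n * q) / n = q := by
      rw [Nat.add_mul_div_left _ _ hn, Nat.div_eq_of_lt hr, zero_add]
    have hk2 : (r + n * q) % n = r := by
      rw [Nat.add_mul_mod_self_left, Nat.mod_eq_of_lt hr]
    set m := (r + n * q + τ) % n ^ 2 with hmdef
    have hsplit : r + n * q + τ = (r + b) + n * (q + a) := by rw [hτs]; ring
    have hm2 : m % n = (r + b) % n := by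
      rw [hmdef, pow_two, Nat.mod_mod_of_dvd _ ⟨n, rfl⟩, hsplit,
        Nat.add_mul_mod_self_left]
    have hm1 : m / n = (q + ((r + b) / n + a)) % n := by
      rw [hmdef, pow_two, Nat.mod_mul_right_div_self, hsplit,
        Nat.add_mul_div_left _ _ hn]
      congr 1
      ring
    rw [hk1, hk2, hm1, hm2, hconj]
    set r' : ℕ := (r + b) % n with hr'def
    set A : ℕ := (r + b) / n + a with hAdef
    rw [← zpow_natCast ω (q * r), ← zpow_add₀ hω0]
    rw [← zpow_natCast (ω ^ ((r : ℤ) - (r' : ℕ))), ← zpow_mul, ← zpow_add₀ hω0]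
    apply hEmod
    push_cast
    have h1 : (((q : ℤ) + A) % n) % (n : ℤ) = ((q : ℤ) + A) % n :=
      Int.emod_emod_of_dvd _ dvd_rfl
    have h2 : ((q : ℤ) * r + -(((q : ℤ) + A) % n * r')) % (n : ℤ)
        = ((q : ℤ) * r + -(((q : ℤ) + A) * r')) % (n : ℤ) :=
      Int.ModEq.add_left _ (Int.ModEq.neg (Int.ModEq.mul_right _ h1))
    rw [h2]
    congr 1
    ring
  rw [Finset.sum_congr rfl (fun r hr => Finset.sum_congr rfl
    (fun q hq => key r (mem_range.mp hr) q (mem_range.mp hq)))]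
  by_cases hb0 : b = 0
  · -- b = 0 : then n ∣ τ and n ∤ a
    have hna : ¬ (n : ℤ) ∣ (a : ℤ) := by
      rw [Int.natCast_dvd_natCast]
      rintro ⟨c, hc⟩
      exact hτ ⟨c, by rw [pow_two, hτs, hb0, hc]; ring⟩
    have hx : ω ^ (-(a : ℤ)) ≠ 1 := by
      intro h
      rw [hprim.zpow_eq_one_iff_dvd, Int.dvd_neg] at h
      exact hna h
    calc ∑ r ∈ range n, ∑ q ∈ range n,
          (ω ^ ((r : ℤ) - ((r + b) % n : ℕ))) ^ q
            * ω ^ (-((((r + b) / n + a) * ((r + b) % n) : ℕ) : ℤ))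
        = ∑ r ∈ range n, (n : ℂ) * (ω ^ (-(a : ℤ))) ^ r := by
          apply Finset.sum_congr rfl
          intro r hr
          have hrn := mem_range.mp hr
          have e1 : (r + b) % n = r := by rw [hb0, Nat.add_zero, Nat.mod_eq_of_lt hrn]
          have e2 : (r + b) / n = 0 := by rw [hb0, Nat.add_zero, Nat.div_eq_of_lt hrn]
          rw [e1, e2]
          rw [show ((r : ℤ) - (r : ℕ)) = 0 by simp, zpow_zero]
          simp only [one_pow, one_mul]
          rw [Finset.sum_const, Finset.card_range, nsmul_eq_mul]
          congr 1
          rw [show (-(((0 + a) * r : ℕ) : ℤ)) = (-(a : ℤ)) * r by push_cast; ring,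
            zpow_mul, zpow_natCast]
      _ = (n : ℂ) * ∑ r ∈ range n, (ω ^ (-(a : ℤ))) ^ r := by rw [Finset.mul_sum]
      _ = 0 := by rw [hgeom _ hx, mul_zero]
  · -- b ≠ 0
    apply Finset.sum_eq_zero
    intro r hr
    have hrn := mem_range.mp hr
    rw [← Finset.sum_mul]
    have hx : ω ^ ((r : ℤ) - ((r + b) % n : ℕ)) ≠ 1 := by
      intro h
      rw [hprim.zpow_eq_one_iff_dvd] at h
      have h2 : (n : ℤ) ∣ ((r : ℤ) + b) - ((r + b) % n : ℕ) := by
        refine ⟨((r + b) / n : ℕ), ?_⟩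
        have h4 : (((r + b) % n : ℕ) : ℤ) + (n : ℤ) * (((r + b) / n : ℕ) : ℤ)
            = (r : ℤ) + (b : ℤ) := by exact_mod_cast Nat.mod_add_div (r + b) n
        linarith
      have h3 : (n : ℤ) ∣ (b : ℤ) := by
        have := dvd_sub h2 h
        simpa using this
      rw [Int.natCast_dvd_natCast] at h3
      exact hb0 (Nat.eq_zero_of_dvd_of_lt h3 (Nat.mod_lt τ hn))
    rw [hgeom _ hx, zero_mul]
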